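/- Set ε = √(3/8) and let (α,β) ∈ ℝ² with (α,β) ≠ (0,0). Critical points of the zero set of ψ_{α,β} on the boundary of the rectangle (−πε/2, πε/2) × (−π/2, π/2) can occur only at the midpoints (±πε/2, 0) of the vertical sides and only when α ± 2β = 0. Precisely: (i) if y ∈ (−π/2, π/2) and ψ_{α,β}(πε/2, y) = 0 and ∂_yψ_{α,β}(πε/2, y) = 0, then y = 0 and α + 2β = 0; (ii) if y ∈ (−π/2, π/2) and ψ_{α,β}(−πε/2, y) = 0 and ∂_yψ_{α,β}(−πε/2, y) = 0, then y = 0 and α − 2β = 0; (iii) there is no x ∈ (−πε/2, πε/2) with ψ_{α,β}(x, ±π/2) = 0 and ∂_xψ_{α,β}(x, ±π/2) = 0. -/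

import Mathlib

open Real

noncomputable section

/-- The critical aspect ratio `ε = √(3/8)`. -/
def epsc : ℝ := Real.sqrt (3 / 8)

/-- The function `ψ_{α,β}(x,y) = α(1 − 4 sin²y) + 2β sin(x/ε)` with `ε = √(3/8)`,
whose zero set coincides inside the rectangle with the zero set of `φ_{α,β}`. -/
def psiAB (α β x y : ℝ) : ℝ :=
  α * (1 - 4 * Real.sin y ^ 2) + 2 * β * Real.sin (x / epsc)

lemma epsc_pos : 0 < epsc := Real.sqrt_pos.mpr (by norm_num)

lemma deriv_y (α β X y : ℝ) :
    deriv (fun t => psiAB α β X t) y = -(8 * α * Real.sin y * Real.cos y) := by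
  have h : HasDerivAt (fun t => psiAB α β X t)
      (-(8 * α * Real.sin y * Real.cos y)) y := by
    unfold psiAB
    have h1 : HasDerivAt (fun t : ℝ => Real.sin t ^ 2)
        (2 * Real.sin y ^ 1 * Real.cos y) y := (Real.hasDerivAt_sin y).pow 2
    have h2 := ((h1.const_mul (4:ℝ)).const_sub 1).const_mul α
    have := h2.add_const (2 * β * Real.sin (X / epsc))
    refine this.congr_deriv ?_
    ring
  exact h.deriv

lemma deriv_x (α β Y x : ℝ) :
    deriv (fun t => psiAB α β t Y) x = 2 * β * Real.cos (x / epsc) / epsc := by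
  have h : HasDerivAt (fun t => psiAB α β t Y)
      (2 * β * Real.cos (x / epsc) / epsc) x := by
    unfold psiAB
    have h1 : HasDerivAt (fun t : ℝ => t / epsc) (1 / epsc) x := by
      simpa using (hasDerivAt_id x).div_const epsc
    have h2 := (Real.hasDerivAt_sin (x / epsc)).comp x h1
    have h3 := h2.const_mul (2 * β)
    have := h3.const_add (α * (1 - 4 * Real.sin Y ^ 2))
    refine this.congr_deriv ?_
    ring
  exact h.deriv

/-- For `ε = √(3/8)` and `(α,β) ≠ (0,0)`, critical points of the zero
set of `ψ_{α,β}` on the boundary of the rectangle `(−πε/2, πε/2) × (−π/2, π/2)` can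
occur only at the midpoints `(±πε/2, 0)` of the vertical sides, and only when
`α ± 2β = 0`: (i) on the right side, a boundary critical point forces `y = 0` and
`α + 2β = 0`; (ii) on the left side, it forces `y = 0` and `α − 2β = 0`; (iii) there
is no boundary critical point on the horizontal sides `y = ±π/2`. -/
theorem boundary_critical_points (α β : ℝ) (hαβ : (α, β) ≠ (0, 0)) :
    (∀ y ∈ Set.Ioo (-(π / 2)) (π / 2),
        psiAB α β (π * epsc / 2) y = 0 →
        deriv (fun t => psiAB α β (π * epsc / 2) t) y = 0 →
        y = 0 ∧ α + 2 * β = 0)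
    ∧ (∀ y ∈ Set.Ioo (-(π / 2)) (π / 2),
        psiAB α β (-(π * epsc / 2)) y = 0 →
        deriv (fun t => psiAB α β (-(π * epsc / 2)) t) y = 0 →
        y = 0 ∧ α - 2 * β = 0)
    ∧ (¬ ∃ x ∈ Set.Ioo (-(π * epsc / 2)) (π * epsc / 2),
        psiAB α β x (π / 2) = 0 ∧ deriv (fun t => psiAB α β t (π / 2)) x = 0)
    ∧ (¬ ∃ x ∈ Set.Ioo (-(π * epsc / 2)) (π * epsc / 2),
        psiAB α β x (-(π / 2)) = 0 ∧ deriv (fun t => psiAB α β t (-(π / 2))) x = 0) := by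
  have hεne : epsc ≠ 0 := epsc_pos.ne'
  have hr : (π * epsc / 2) / epsc = π / 2 := by field_simp
  have hl : (-(π * epsc / 2)) / epsc = -(π / 2) := by field_simp
  have hnz : ¬ (α = 0 ∧ β = 0) := by
    intro ⟨h1, h2⟩; exact hαβ (by simp [h1, h2])
  -- common vertical-side argument
  have side : ∀ s : ℝ, s = 1 ∨ s = -1 → ∀ y ∈ Set.Ioo (-(π / 2)) (π / 2),
      α * (1 - 4 * Real.sin y ^ 2) + 2 * β * s = 0 →
      -(8 * α * Real.sin y * Real.cos y) = 0 →
      y = 0 ∧ α * (1 - 4 * Real.sin y ^ 2) + 2 * β * s = 0 := by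
    intro s hs y hy h0 h1
    have hcos : 0 < Real.cos y := Real.cos_pos_of_mem_Ioo hy
    by_cases hα : α = 0
    · exfalso
      subst hα
      simp only [zero_mul, zero_add] at h0
      rcases hs with hs | hs <;> subst hs <;>
        exact hnz ⟨rfl, by linarith⟩
    · have hsin : Real.sin y = 0 := by
        have h1' : (8 * α * Real.sin y) * Real.cos y = 0 := by linarith
        rcases mul_eq_zero.mp h1' with h | h
        · rcases mul_eq_zero.mp h with h | h
          · exact absurd h (by positivity)
          · exact h
        · exact absurd h hcos.ne'
      have hy0 : y = 0 := by
        have := Real.sin_eq_zero_iff_of_lt_of_lt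
          (by linarith [hy.1, Real.pi_pos] : -π < y)
          (by linarith [hy.2, Real.pi_pos] : y < π)
        exact this.mp hsin
      exact ⟨hy0, h0⟩
  refine ⟨?_, ?_, ?_, ?_⟩
  · intro y hy h0 h1
    rw [deriv_y] at h1
    unfold psiAB at h0
    rw [hr, Real.sin_pi_div_two] at h0
    obtain ⟨hy0, h0'⟩ := side 1 (Or.inl rfl) y hy h0 h1
    subst hy0
    simp at h0'
    exact ⟨rfl, by linarith⟩
  · intro y hy h0 h1
    rw [deriv_y] at h1
    unfold psiAB at h0
    rw [hl, Real.sin_neg, Real.sin_pi_div_two] at h0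
    obtain ⟨hy0, h0'⟩ := side (-1) (Or.inr rfl) y hy (by linarith) h1
    subst hy0
    simp at h0'
    exact ⟨rfl, by linarith⟩
  all_goals {
    rintro ⟨x, hx, h0, h1⟩
    rw [deriv_x] at h1
    have hmem : x / epsc ∈ Set.Ioo (-(π / 2)) (π / 2) := by
      constructor
      · rw [lt_div_iff₀ epsc_pos]; nlinarith [hx.1]
      · rw [div_lt_iff₀ epsc_pos]; nlinarith [hx.2]
    have hcos : 0 < Real.cos (x / epsc) := Real.cos_pos_of_mem_Ioo hmem
    have hβ : β = 0 := by
      have : 2 * β * Real.cos (x / epsc) = 0 := by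
        field_simp at h1; linarith [h1]
      rcases mul_eq_zero.mp this with h | h
      · linarith
      · exact absurd h hcos.ne'
    unfold psiAB at h0
    first
    | rw [Real.sin_pi_div_two] at h0
    | rw [Real.sin_neg, Real.sin_pi_div_two] at h0
    rw [hβ] at h0
    ring_nf at h0
    exact hnz ⟨by linarith, hβ⟩ }

end
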